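/- For 1 ≤ p < 2, let X_1, ..., X_n be (possibly dependent) p-stable random variables, and let γ_1, ..., γ_n > 0 with γ = Σ γ_i. Then there is a constant α_p depending only on p such that for any t ≥ 1 and n ≥ 3, Pr[Σ_{i=1}^n γ_i |X_i|^p > α_p γ t] ≤ 2 log(n t) / t. -/

import Mathlib

open MeasureTheory ProbabilityTheory Finset

/-- A distribution `D` on ℝ is `p`-stable if for every linear combination with
coefficients `a`, the law of `∑ a_i X_i` (for i.i.d. `X_i ~ D`) equals the law of
`(∑ |a_i|^p)^{1/p} X` for `X ~ D`. -/
def IsPStable (p : ℝ) (D : Measure ℝ) : Prop :=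
  ∀ (n : ℕ) (a : Fin n → ℝ),
    (Measure.pi fun _ : Fin n => D).map (fun x => ∑ i, a i * x i) =
      D.map (fun x => (∑ i, |a i| ^ p) ^ (1 / p) * x)

open scoped ENNReal

noncomputable def phiD (D : Measure ℝ) (ξ : ℝ) : ℝ := ∫ x, Real.cos (ξ * x) ∂D

section basics
variable {p : ℝ} (hp1 : 1 ≤ p) (hp2 : p < 2) {D : Measure ℝ} [IsProbabilityMeasure D]
  (hD : IsPStable p D)

lemma cos_integrable (ξ : ℝ) : Integrable (fun x => Real.cos (ξ * x)) D := by
  refine (integrable_const (1:ℝ)).mono' ?_ ?_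
  · exact (Real.continuous_cos.comp (continuous_const.mul continuous_id)).aestronglyMeasurable
  · filter_upwards with x
    simpa [Real.norm_eq_abs] using Real.abs_cos_le_one (ξ * x)

lemma sin_integrable (ξ : ℝ) : Integrable (fun x => Real.sin (ξ * x)) D := by
  refine (integrable_const (1:ℝ)).mono' ?_ ?_
  · exact (Real.continuous_sin.comp (continuous_const.mul continuous_id)).aestronglyMeasurable
  · filter_upwards with x
    simpa [Real.norm_eq_abs] using Real.abs_sin_le_one (ξ * x)

lemma phiD_zero : phiD D 0 = 1 := by simp [phiD]

lemma phiD_le_one (ξ : ℝ) : |phiD D ξ| ≤ 1 := by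
  have := norm_integral_le_of_norm_le_const (μ := D) (C := 1)
    (f := fun x => Real.cos (ξ * x)) ?_
  · simpa [phiD, Real.norm_eq_abs] using this
  · filter_upwards with x
    simpa [Real.norm_eq_abs] using Real.abs_cos_le_one (ξ * x)

include hp1 hD in
lemma neg_map : D.map (fun x => -x) = D := by
  have h1 := hD 1 (fun _ => 1)
  have h2 := hD 1 (fun _ => -1)
  have hpow : ((1:ℝ)) ^ (1/p) = 1 := Real.one_rpow _
  simp only [Fin.sum_univ_one, abs_one, abs_neg, Real.one_rpow, hpow, one_mul] at h1 h2
  have hid : D.map (fun x : ℝ => x) = D := Measure.map_id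
  rw [hid] at h1 h2
  have he : (fun x : Fin 1 → ℝ => (-1:ℝ) * x 0) =
      (fun y : ℝ => -y) ∘ (fun x : Fin 1 → ℝ => x 0) := by
    funext x; simp
  rw [he, ← Measure.map_map (by fun_prop) (by fun_prop), h1] at h2
  exact h2

include hp1 hD in
lemma sin_int_zero (t : ℝ) : ∫ x, Real.sin (t * x) ∂D = 0 := by
  have hneg := neg_map hp1 hD
  have h : ∫ x, Real.sin (t * x) ∂D = ∫ x, Real.sin (t * (-x)) ∂D := by
    conv_lhs => rw [← hneg]
    rw [integral_map measurable_neg.aemeasurable]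
    exact (Real.continuous_sin.comp (continuous_const.mul continuous_id)).aestronglyMeasurable
  have h2 : ∫ x, Real.sin (t * (-x)) ∂D = - ∫ x, Real.sin (t * x) ∂D := by
    rw [← integral_neg]
    congr 1; funext x; simp [Real.sin_neg]
  linarith [h, h2]

include hp1 hD in
lemma phiD_mul {s t : ℝ} (hs : 0 ≤ s) (ht : 0 ≤ t) :
    phiD D ((s ^ p + t ^ p) ^ (1/p)) = phiD D s * phiD D t := by
  have key := hD 2 ![s, t]
  simp only [Fin.sum_univ_two, Matrix.cons_val_zero, Matrix.cons_val_one, Matrix.head_cons,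
    abs_of_nonneg hs, abs_of_nonneg ht] at key
  set c := (s ^ p + t ^ p) ^ (1/p) with hc
  have hcos : Continuous fun y : ℝ => Real.cos y := Real.continuous_cos
  -- integrate cos over both sides
  have hR : ∫ y, Real.cos y ∂(D.map (fun x => c * x)) = phiD D c := by
    rw [integral_map (by fun_prop) hcos.aestronglyMeasurable]
    rfl
  have hmf : Measurable fun x : Fin 2 → ℝ => s * x 0 + t * x 1 := by fun_prop
  have hL : ∫ y, Real.cos y ∂((Measure.pi fun _ : Fin 2 => D).map
      (fun x => s * x 0 + t * x 1)) = phiD D s * phiD D t := by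
    rw [integral_map hmf.aemeasurable hcos.aestronglyMeasurable]
    have hprev := measurePreserving_finTwoArrow (μ := D)
    have hmap := hprev.map_eq
    have step1 : ∫ x, Real.cos (s * x 0 + t * x 1) ∂(Measure.pi fun _ : Fin 2 => D)
        = ∫ z, Real.cos (s * z.1 + t * z.2) ∂(D.prod D) := by
      rw [← hmap, integral_map_equiv]
      rfl
    rw [step1]
    have hint : Integrable (fun z : ℝ × ℝ => Real.cos (s * z.1 + t * z.2)) (D.prod D) := by
      refine (integrable_const (1:ℝ)).mono' ?_ ?_
      · exact (Real.continuous_cos.comp (by fun_prop)).aestronglyMeasurable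
      · filter_upwards with z
        simpa [Real.norm_eq_abs] using Real.abs_cos_le_one _
    rw [integral_prod _ hint]
    have inner : ∀ x : ℝ, ∫ y, Real.cos (s * x + t * y) ∂D
        = Real.cos (s * x) * phiD D t := by
      intro x
      have : (fun y => Real.cos (s * x + t * y)) =
          fun y => Real.cos (s * x) * Real.cos (t * y) - Real.sin (s * x) * Real.sin (t * y) := by
        funext y; rw [Real.cos_add]
      rw [this, integral_sub ((cos_integrable t).const_mul _) ((sin_integrable t).const_mul _),
        integral_const_mul, integral_const_mul, sin_int_zero hp1 hD]
      simp [phiD]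
    simp only [inner]
    rw [integral_mul_const]
    rfl
  rw [key, hR] at hL
  exact hL

lemma phiD_cont : Continuous (phiD D) := by
  refine continuous_of_dominated (F := fun ξ x => Real.cos (ξ * x)) (bound := fun _ => 1)
    (fun ξ => (Real.continuous_cos.comp (by fun_prop)).aestronglyMeasurable)
    (fun ξ => ?_) (integrable_const 1) ?_
  · filter_upwards with x
    simpa [Real.norm_eq_abs] using Real.abs_cos_le_one (ξ * x)
  · filter_upwards with x
    exact Real.continuous_cos.comp (continuous_id.mul continuous_const)

noncomputable def psiD (p : ℝ) (D : Measure ℝ) (u : ℝ) : ℝ := phiD D (u ^ (1/p))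

include hp1 hD in
lemma psiD_add {a b : ℝ} (ha : 0 ≤ a) (hb : 0 ≤ b) :
    psiD p D (a + b) = psiD p D a * psiD p D b := by
  have hp0 : p ≠ 0 := by positivity
  have h := phiD_mul hp1 hD (Real.rpow_nonneg ha (1/p)) (Real.rpow_nonneg hb (1/p))
  have hsp : (a ^ (1/p)) ^ p = a := by
    rw [← Real.rpow_mul ha, one_div, inv_mul_cancel₀ hp0, Real.rpow_one]
  have htp : (b ^ (1/p)) ^ p = b := by
    rw [← Real.rpow_mul hb, one_div, inv_mul_cancel₀ hp0, Real.rpow_one]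
  rw [hsp, htp] at h
  exact h

lemma psiD_zero (hp0 : p ≠ 0) : psiD p D 0 = 1 := by
  unfold psiD
  rw [Real.zero_rpow (by simpa [one_div] using inv_ne_zero hp0 : 1/p ≠ 0), phiD_zero]

include hp1 hD in
lemma psiD_nonneg {a : ℝ} (ha : 0 ≤ a) : 0 ≤ psiD p D a := by
  have h := psiD_add hp1 hD (by linarith : (0:ℝ) ≤ a/2) (by linarith : (0:ℝ) ≤ a/2)
  rw [add_halves] at h
  rw [h]; exact mul_self_nonneg _

lemma psiD_le_one (a : ℝ) : psiD p D a ≤ 1 := by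
  have := phiD_le_one (D := D) (a ^ (1/p))
  have := abs_le.mp this
  exact this.2

include hp1 hD in
lemma psiD_anti {a b : ℝ} (ha : 0 ≤ a) (hab : a ≤ b) : psiD p D b ≤ psiD p D a := by
  have h := psiD_add hp1 hD ha (by linarith : (0:ℝ) ≤ b - a)
  rw [add_sub_cancel] at h
  rw [h]
  exact mul_le_of_le_one_right (psiD_nonneg hp1 hD ha) (psiD_le_one _)

include hp1 hD in
lemma psiD_one_pos : 0 < psiD p D 1 := by
  rcases lt_or_eq_of_le (psiD_nonneg hp1 hD (le_refl (0:ℝ)) |> fun _ =>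
    psiD_nonneg hp1 hD (zero_le_one)) with h | h
  · exact h
  exfalso
  have hzero : ∀ k : ℕ, psiD p D ((1/2 : ℝ) ^ k) = 0 := by
    intro k; induction k with
    | zero => simpa using h.symm
    | succ k ih =>
      have hhalf : ((1/2:ℝ) ^ (k+1)) + ((1/2:ℝ) ^ (k+1)) = (1/2:ℝ)^k := by ring
      have := psiD_add hp1 hD (by positivity : (0:ℝ) ≤ (1/2:ℝ)^(k+1))
        (by positivity : (0:ℝ) ≤ (1/2:ℝ)^(k+1))
      rw [hhalf, ih] at this
      exact mul_self_eq_zero.mp this.symm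
  -- rewrite ψ((1/2)^k) = φ(r^k) with r = (1/2)^(1/p)
  have hp0 : (0:ℝ) < p := by linarith
  set r : ℝ := (1/2 : ℝ) ^ (1/p) with hr
  have hrineq : 0 ≤ r ∧ r < 1 := by
    constructor
    · exact Real.rpow_nonneg (by norm_num) _
    · exact Real.rpow_lt_one (by norm_num) (by norm_num) (by positivity)
  have hrk : ∀ k : ℕ, psiD p D ((1/2 : ℝ) ^ k) = phiD D (r ^ k) := by
    intro k
    have : ((1/2:ℝ) ^ k) ^ (1/p) = r ^ k := by
      rw [← Real.rpow_natCast (1/2 : ℝ) k, ← Real.rpow_mul (by norm_num),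
        mul_comm, Real.rpow_mul (by norm_num), Real.rpow_natCast]
    unfold psiD
    rw [this]
  have htend : Filter.Tendsto (fun k : ℕ => phiD D (r ^ k)) Filter.atTop (nhds 1) := by
    have h1 : Filter.Tendsto (fun k : ℕ => r ^ k) Filter.atTop (nhds 0) :=
      tendsto_pow_atTop_nhds_zero_of_lt_one hrineq.1 hrineq.2
    have := (phiD_cont (D := D)).continuousAt (x := 0)
    have h2 := this.tendsto.comp h1
    simpa [phiD_zero, Function.comp_def] using h2
  have hconst : Filter.Tendsto (fun k : ℕ => phiD D (r ^ k)) Filter.atTop (nhds 0) := by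
    have : (fun k : ℕ => phiD D (r ^ k)) = fun _ => (0:ℝ) := by
      funext k; rw [← hrk, hzero]
    rw [this]; exact tendsto_const_nhds
  exact one_ne_zero (tendsto_nhds_unique htend hconst)

include hp1 hD in
lemma one_sub_phiD : ∃ K : ℝ, 0 ≤ K ∧ ∀ ξ : ℝ, 0 ≤ ξ → ξ ≤ 1 → 1 - phiD D ξ ≤ K * ξ ^ p := by
  have hψ1pos := psiD_one_pos hp1 hD
  have hψ1le := psiD_le_one (p := p) (D := D) 1
  set c : ℝ := -Real.log (psiD p D 1) with hc
  have hc0 : 0 ≤ c := by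
    have := Real.log_nonpos (le_of_lt hψ1pos) hψ1le
    linarith
  -- ψ(1/n) = exp(log ψ1 / n)
  have hpown : ∀ n : ℕ, 1 ≤ n → psiD p D (1/(n:ℝ)) ^ n = psiD p D 1 := by
    intro n hn
    have claim : ∀ m : ℕ, psiD p D ((m : ℝ) * (1/(n:ℝ))) = psiD p D (1/(n:ℝ)) ^ m := by
      intro m
      induction m with
      | zero => simpa using psiD_zero (p := p) (D := D) (by positivity)
      | succ m ih =>
        have hstep : ((m+1 : ℕ) : ℝ) * (1/(n:ℝ)) = (m:ℝ) * (1/(n:ℝ)) + 1/(n:ℝ) := by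
          push_cast; ring
        rw [hstep, psiD_add hp1 hD (by positivity) (by positivity), ih, pow_succ]
    have := claim n
    rw [mul_one_div, div_self (by exact_mod_cast Nat.pos_of_ne_zero (by omega) |>.ne')] at this
    exact this.symm
  have hroot : ∀ n : ℕ, 1 ≤ n → 1 - psiD p D (1/(n:ℝ)) ≤ c / n := by
    intro n hn
    have hnR : (0:ℝ) < n := by exact_mod_cast hn
    have hexp : (Real.exp (Real.log (psiD p D 1) / n)) ^ n = psiD p D 1 := by
      rw [← Real.exp_nat_mul, mul_div_cancel₀ _ hnR.ne', Real.exp_log hψ1pos]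
    have heq : psiD p D (1/(n:ℝ)) = Real.exp (Real.log (psiD p D 1) / n) := by
      have h1 : psiD p D (1/(n:ℝ)) ^ n = (Real.exp (Real.log (psiD p D 1) / n)) ^ n := by
        rw [hexp, hpown n hn]
      exact pow_left_strictMonoOn₀ (by omega : n ≠ 0) |>.injOn
        (by exact psiD_nonneg hp1 hD (by positivity)) (Set.mem_setOf.mpr (Real.exp_nonneg _)) h1
    rw [heq]
    have := Real.add_one_le_exp (Real.log (psiD p D 1) / n)
    have : 1 - Real.exp (Real.log (psiD p D 1) / n) ≤ - (Real.log (psiD p D 1) / n) := by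
      linarith
    calc 1 - Real.exp (Real.log (psiD p D 1) / n) ≤ - (Real.log (psiD p D 1) / n) := this
      _ = c / n := by rw [hc]; ring
  have hlin : ∀ v : ℝ, 0 < v → v ≤ 1 → 1 - psiD p D v ≤ 2 * c * v := by
    intro v hv hv1
    set n : ℕ := ⌊1/v⌋₊ with hn
    have h1v : (1:ℝ) ≤ 1/v := by
      rw [le_div_iff₀ hv]; linarith
    have hn1 : 1 ≤ n := by
      rw [hn]
      exact_mod_cast Nat.le_floor (by exact_mod_cast h1v)
    have hnR : (0:ℝ) < n := by exact_mod_cast hn1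
    have hfloor : (n:ℝ) ≤ 1/v := Nat.floor_le (by positivity)
    have hvv : v * (1/v) = 1 := by field_simp
    have hvn : v ≤ 1/(n:ℝ) := by
      rw [le_div_iff₀ hnR]
      nlinarith [mul_le_mul_of_nonneg_left hfloor hv.le]
    have hlt : 1/v < (n:ℝ) + 1 := Nat.lt_floor_add_one _
    have hn1R : (1:ℝ) ≤ (n:ℝ) := by exact_mod_cast hn1
    have h2v : 1/(n:ℝ) ≤ 2 * v := by
      rw [div_le_iff₀ hnR]
      nlinarith [mul_lt_mul_of_pos_left hlt hv]
    have hmono := psiD_anti hp1 hD (le_of_lt hv) hvn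
    have := hroot n hn1
    calc 1 - psiD p D v ≤ 1 - psiD p D (1/(n:ℝ)) := by linarith
      _ ≤ c / n := this
      _ = c * (1/(n:ℝ)) := by ring
      _ ≤ c * (2*v) := by
          apply mul_le_mul_of_nonneg_left h2v hc0
      _ = 2 * c * v := by ring
  refine ⟨2*c, by linarith, fun ξ hξ0 hξ1 => ?_⟩
  rcases eq_or_lt_of_le hξ0 with h0 | h0
  · rw [← h0]
    rw [Real.zero_rpow (by positivity : p ≠ 0), phiD_zero]
    simp
  · have hv : 0 < ξ ^ p := Real.rpow_pos_of_pos h0 p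
    have hv1 : ξ ^ p ≤ 1 := Real.rpow_le_one hξ0 hξ1 (by linarith)
    have hval : psiD p D (ξ ^ p) = phiD D ξ := by
      unfold psiD
      rw [← Real.rpow_mul (le_of_lt h0), mul_one_div, div_self (by positivity : p ≠ 0),
        Real.rpow_one]
    have := hlin (ξ ^ p) hv hv1
    rw [hval] at this
    linarith

include hp1 hp2 hD in
lemma tail_bound : ∃ A : ℝ, 1 ≤ A ∧ ∀ s : ℝ, 0 < s →
    D {x : ℝ | s < |x|} ≤ ENNReal.ofReal (A / s ^ p) := by
  obtain ⟨K, hK0, hKb⟩ := one_sub_phiD hp1 hD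
  have hp0 : (0:ℝ) < p := by linarith
  -- main estimate
  have main : ∀ u : ℝ, 0 < u → u ≤ 1 →
      (D {x : ℝ | 2/u < |x|}).toReal ≤ 2 * K * u ^ p := by
    intro u hu hu1
    set ν : Measure ℝ := volume.restrict (Set.Ioc 0 u) with hν
    haveI : IsFiniteMeasure ν := by
      constructor
      rw [hν, Measure.restrict_apply_univ, Real.volume_Ioc]
      exact ENNReal.ofReal_lt_top
    set f : ℝ → ℝ → ℝ := fun x ξ => 1 - Real.cos (ξ * x) with hf
    have hFint : Integrable (Function.uncurry f) (D.prod ν) := by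
      refine (integrable_const (2:ℝ)).mono' ?_ ?_
      · exact (continuous_const.sub (Real.continuous_cos.comp
          (continuous_snd.mul continuous_fst))).aestronglyMeasurable
      · filter_upwards with z
        obtain ⟨x, ξ⟩ := z
        rw [Real.norm_eq_abs, abs_le]
        simp only [Function.uncurry_apply_pair, hf]
        constructor <;> nlinarith [Real.cos_le_one (ξ * x), Real.neg_one_le_cos (ξ * x)]
    set g : ℝ → ℝ := fun x => ∫ ξ, f x ξ ∂ν with hg
    have hg_int : Integrable g D := hFint.integral_prod_left
    have hg_nonneg : ∀ x, 0 ≤ g x := by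
      intro x
      apply integral_nonneg
      intro ξ
      simp only [hf, Pi.zero_apply]
      nlinarith [Real.cos_le_one (ξ * x)]
    -- Fubini
    have hswap : ∫ x, g x ∂D = ∫ ξ, (∫ x, f x ξ ∂D) ∂ν :=
      integral_integral_swap hFint
    -- inner integral wrt D
    have hinner : ∀ ξ : ℝ, ∫ x, f x ξ ∂D = 1 - phiD D ξ := by
      intro ξ
      rw [hf]
      simp only
      rw [integral_sub (integrable_const 1) (cos_integrable ξ), integral_const]
      simp [phiD, measure_univ]
    have hupper : ∫ x, g x ∂D ≤ K * u ^ p * u := by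
      rw [hswap]
      have hb : ∀ ξ ∈ Set.Ioc (0:ℝ) u, (∫ x, f x ξ ∂D) ≤ K * u ^ p := by
        intro ξ hξ
        rw [hinner]
        have h1 := hKb ξ (le_of_lt hξ.1) (le_trans hξ.2 hu1)
        have h2 : ξ ^ p ≤ u ^ p := Real.rpow_le_rpow (le_of_lt hξ.1) hξ.2 (le_of_lt hp0)
        nlinarith
      calc ∫ ξ, (∫ x, f x ξ ∂D) ∂ν ≤ ∫ _ξ, K * u ^ p ∂ν := by
            apply integral_mono_of_nonneg
            · filter_upwards with ξ
              simp only [Pi.zero_apply]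
              rw [hinner]
              have := abs_le.mp (phiD_le_one (D := D) ξ)
              linarith [this.1]
            · exact integrable_const _
            · rw [hν]
              refine (ae_restrict_iff' measurableSet_Ioc).mpr ?_
              filter_upwards with ξ hξ
              exact hb ξ hξ
        _ = K * u ^ p * u := by
            rw [integral_const, hν, measureReal_def, Measure.restrict_apply_univ, Real.volume_Ioc,
              smul_eq_mul, ENNReal.toReal_ofReal (by linarith), sub_zero, mul_comm]
    -- lower bound on the set
    set S : Set ℝ := {x : ℝ | 2/u < |x|} with hS
    have hSmeas : MeasurableSet S := (isOpen_lt continuous_const continuous_abs).measurableSet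
    have hglow : ∀ x ∈ S, u/2 ≤ g x := by
      intro x hx
      have hxabs : 2/u < |x| := hx
      have hxne : x ≠ 0 := by
        intro h0
        rw [h0] at hxabs
        simp at hxabs
        have : 0 < 2/u := by positivity
        linarith
      have hcalc : g x = u - Real.sin (x * u) / x := by
        rw [hg]
        simp only
        have : ∫ ξ, f x ξ ∂ν = ∫ ξ in (0:ℝ)..u, (1 - Real.cos (ξ * x)) := by
          rw [intervalIntegral.integral_of_le (le_of_lt hu), hν]
        rw [this]
        have hsplit : ∫ ξ in (0:ℝ)..u, (1 - Real.cos (ξ * x))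
            = (∫ _ξ in (0:ℝ)..u, (1:ℝ)) - ∫ ξ in (0:ℝ)..u, Real.cos (ξ * x) := by
          apply intervalIntegral.integral_sub intervalIntegrable_const
          exact (Real.continuous_cos.comp (continuous_id.mul continuous_const)).intervalIntegrable _ _
        rw [hsplit]
        have hcosint : ∫ ξ in (0:ℝ)..u, Real.cos (ξ * x) = Real.sin (x * u) / x := by
          have hcomm : ∀ ξ : ℝ, Real.cos (ξ * x) = Real.cos (x * ξ) := fun ξ => by rw [mul_comm]
          simp only [hcomm]
          rw [intervalIntegral.integral_comp_mul_left (fun y => Real.cos y) hxne]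
          rw [mul_zero, integral_cos, Real.sin_zero, sub_zero, smul_eq_mul]
          ring
        rw [hcosint]
        simp
      rw [hcalc]
      have habs : |Real.sin (x * u) / x| ≤ u / 2 := by
        rw [abs_div]
        have h1 : |Real.sin (x * u)| ≤ 1 := Real.abs_sin_le_one _
        have h2 : 2/u ≤ |x| := le_of_lt hxabs
        have hxpos : 0 < |x| := abs_pos.mpr hxne
        rw [div_le_iff₀ hxpos]
        calc |Real.sin (x * u)| ≤ 1 := h1
          _ ≤ u / 2 * (2/u) := by
              rw [div_mul_div_comm]
              rw [le_div_iff₀ (by positivity)]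
              ring_nf
              linarith
          _ ≤ u / 2 * |x| := by
              apply mul_le_mul_of_nonneg_left h2 (by positivity)
      have := abs_le.mp habs
      linarith [this.2]
    have hlow : u/2 * (D S).toReal ≤ ∫ x, g x ∂D := by
      calc u/2 * (D S).toReal ≤ ∫ x in S, g x ∂D :=
            setIntegral_ge_of_const_le_real hSmeas (measure_ne_top D S) hglow hg_int.integrableOn
        _ ≤ ∫ x, g x ∂D := setIntegral_le_integral hg_int
              (Filter.Eventually.of_forall hg_nonneg)
      -- done
    have hfin : u/2 * (D S).toReal ≤ K * u ^ p * u := le_trans hlow hupper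
    by_contra hcon
    push_neg at hcon
    nlinarith [mul_pos hu (sub_pos.mpr hcon)]
  -- conclude
  refine ⟨8*K + 4, by linarith, fun s hs => ?_⟩
  have hsp : 0 < s ^ p := Real.rpow_pos_of_pos hs p
  rcases le_or_gt 2 s with h2 | h2
  · set u : ℝ := 2/s with hu'
    have hu : 0 < u := by positivity
    have hu1 : u ≤ 1 := by
      rw [hu', div_le_one hs]; linarith
    have h2u : 2/u = s := by
      rw [hu']; field_simp
    have := main u hu hu1
    rw [h2u] at this
    have hupb : 2 * K * u ^ p ≤ (8*K+4) / s ^ p := by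
      have : u ^ p = 2 ^ p / s ^ p := by
        rw [hu', Real.div_rpow (by norm_num) (le_of_lt hs)]
      rw [this]
      have h2p : (2:ℝ) ^ p ≤ 4 := by
        calc (2:ℝ) ^ p ≤ 2 ^ (2:ℝ) := Real.rpow_le_rpow_of_exponent_le (by norm_num) (by linarith)
          _ = 4 := by
              rw [show (2:ℝ) = ((2:ℕ):ℝ) by norm_num, Real.rpow_natCast]
              norm_num
      have hrw : 2 * K * (2 ^ p / s ^ p) = (2 * K * 2 ^ p) / s ^ p := by ring
      rw [hrw]
      gcongr
      nlinarith
    calc D {x : ℝ | s < |x|} ≤ ENNReal.ofReal (2 * K * u ^ p) := by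
          rw [ENNReal.le_ofReal_iff_toReal_le (measure_ne_top D _) (by positivity)]
          exact this
      _ ≤ ENNReal.ofReal ((8*K+4) / s ^ p) := ENNReal.ofReal_le_ofReal hupb
  · have hsple : s ^ p ≤ 4 := by
      calc s ^ p ≤ 2 ^ p := Real.rpow_le_rpow (le_of_lt hs) (le_of_lt h2) (by linarith)
        _ ≤ 2 ^ (2:ℝ) := Real.rpow_le_rpow_of_exponent_le (by norm_num) (by linarith)
        _ = 4 := by
            rw [show (2:ℝ) = ((2:ℕ):ℝ) by norm_num, Real.rpow_natCast]
            norm_num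
    calc D {x : ℝ | s < |x|} ≤ 1 := prob_le_one
      _ = ENNReal.ofReal 1 := by simp
      _ ≤ ENNReal.ofReal ((8*K+4) / s ^ p) := by
          apply ENNReal.ofReal_le_ofReal
          rw [le_div_iff₀ hsp]
          nlinarith

lemma hpow_abs_meas (hp0 : 0 ≤ p) : Measurable (fun x : ℝ => |x| ^ p) :=
  (Real.continuous_rpow_const hp0).comp continuous_abs |>.measurable

include hp1 in
lemma trunc_moment (A : ℝ) (hA : 1 ≤ A)
    (htail : ∀ s : ℝ, 0 < s → D {x : ℝ | s < |x|} ≤ ENNReal.ofReal (A / s ^ p)) :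
    ∀ M : ℝ, 1 ≤ M →
      ∫⁻ x, ENNReal.ofReal (min (|x| ^ p) M) ∂D ≤ ENNReal.ofReal (1 + A * Real.log M) := by
  intro M hM
  have hp0 : (0:ℝ) < p := by linarith
  set f : ℝ → ℝ := fun x => min (|x| ^ p) M with hf
  have f_nn : 0 ≤ᵐ[D] f := by
    filter_upwards with x
    simp only [Pi.zero_apply, hf]
    exact le_min (Real.rpow_nonneg (abs_nonneg x) p) (by linarith)
  have f_mble : AEMeasurable f D :=
    ((hpow_abs_meas (le_of_lt hp0)).min measurable_const).aemeasurable
  rw [lintegral_eq_lintegral_meas_lt D f_nn f_mble]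
  have hsplit : Set.Ioi (0:ℝ) = Set.Ioc 0 1 ∪ (Set.Ioc 1 M ∪ Set.Ioi M) := by
    rw [Set.Ioc_union_Ioi_eq_Ioi hM, Set.Ioc_union_Ioi_eq_Ioi (by norm_num : (0:ℝ) ≤ 1)]
  rw [hsplit]
  calc ∫⁻ t in Set.Ioc 0 1 ∪ (Set.Ioc 1 M ∪ Set.Ioi M), D {a | t < f a}
      ≤ (∫⁻ t in Set.Ioc (0:ℝ) 1, D {a | t < f a}) +
        ∫⁻ t in Set.Ioc 1 M ∪ Set.Ioi M, D {a | t < f a} := lintegral_union_le _ _ _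
    _ ≤ (∫⁻ t in Set.Ioc (0:ℝ) 1, D {a | t < f a}) +
        ((∫⁻ t in Set.Ioc (1:ℝ) M, D {a | t < f a}) + ∫⁻ t in Set.Ioi M, D {a | t < f a}) := by
        gcongr
        exact lintegral_union_le _ _ _
    _ ≤ 1 + (ENNReal.ofReal (A * Real.log M) + 0) := by
        gcongr
        · -- Ioc 0 1 piece
          calc ∫⁻ t in Set.Ioc (0:ℝ) 1, D {a | t < f a}
              ≤ ∫⁻ _t in Set.Ioc (0:ℝ) 1, 1 := by
                apply setLIntegral_mono measurable_const
                intro t _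
                exact prob_le_one
            _ = volume (Set.Ioc (0:ℝ) 1) := setLIntegral_one _
            _ = 1 := by rw [Real.volume_Ioc]; norm_num
        · -- Ioc 1 M piece
          have hstep : ∀ t ∈ Set.Ioc (1:ℝ) M, D {a | t < f a} ≤ ENNReal.ofReal (A / t) := by
            intro t ht
            have ht0 : (0:ℝ) < t := by linarith [ht.1]
            have hsub : {a : ℝ | t < f a} ⊆ {x : ℝ | t ^ (1/p) < |x|} := by
              intro a ha
              have h1 : t < |a| ^ p := lt_of_lt_of_le ha (min_le_left _ _)
              have h2 : (t) ^ (1/p) < (|a| ^ p) ^ (1/p) := by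
                apply Real.rpow_lt_rpow (le_of_lt ht0) h1 (by positivity)
              rwa [← Real.rpow_mul (abs_nonneg a), mul_one_div, div_self hp0.ne',
                Real.rpow_one] at h2
            have := htail (t ^ (1/p)) (Real.rpow_pos_of_pos ht0 _)
            have heq : (t ^ (1/p)) ^ p = t := by
              rw [← Real.rpow_mul (le_of_lt ht0), one_div, inv_mul_cancel₀ hp0.ne',
                Real.rpow_one]
            rw [heq] at this
            exact le_trans (measure_mono hsub) this
          calc ∫⁻ t in Set.Ioc (1:ℝ) M, D {a | t < f a}
              ≤ ∫⁻ t in Set.Ioc (1:ℝ) M, ENNReal.ofReal (A / t) := by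
                apply setLIntegral_mono
                · exact ENNReal.measurable_ofReal.comp (measurable_const.div measurable_id)
                · exact hstep
            _ = ENNReal.ofReal (∫ t in Set.Ioc (1:ℝ) M, A / t) := by
                rw [← ofReal_integral_eq_lintegral_ofReal]
                · refine (ContinuousOn.integrableOn_compact isCompact_Icc ?_).mono_set
                    Set.Ioc_subset_Icc_self
                  apply ContinuousOn.div continuousOn_const continuousOn_id
                  intro t ht h0
                  simp only [id] at h0
                  nlinarith [ht.1]
                · refine (ae_restrict_iff' measurableSet_Ioc).mpr ?_
                  filter_upwards with t ht
                  have : (0:ℝ) < t := by linarith [ht.1]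
                  positivity
            _ = ENNReal.ofReal (A * Real.log M) := by
                congr 1
                rw [← intervalIntegral.integral_of_le hM]
                have : ∀ t : ℝ, A / t = A * t⁻¹ := fun t => by ring
                simp only [this]
                rw [intervalIntegral.integral_const_mul, integral_inv]
                · rw [div_one]
                · intro hmem
                  rw [Set.uIcc_of_le hM] at hmem
                  linarith [hmem.1]
        · -- Ioi M piece
          have : ∀ t ∈ Set.Ioi M, D {a | t < f a} = 0 := by
            intro t ht
            convert measure_empty (μ := D)
            rw [Set.eq_empty_iff_forall_notMem]
            intro a ha
            have h1 : f a ≤ M := min_le_right _ _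
            have h2 : M < t := ht
            exact absurd ha (by simp only [Set.mem_setOf_eq]; linarith)
          calc ∫⁻ t in Set.Ioi M, D {a | t < f a}
              = ∫⁻ _t in Set.Ioi M, 0 := setLIntegral_congr_fun measurableSet_Ioi
                this
            _ = 0 := by simp
            _ ≤ 0 := le_refl 0
    _ = ENNReal.ofReal (1 + A * Real.log M) := by
        rw [add_zero, ENNReal.ofReal_add (by norm_num) ?hnn, ENNReal.ofReal_one]
        case hnn =>
          have : 0 ≤ Real.log M := Real.log_nonneg hM
          positivity

end basics


set_option maxHeartbeats 1000000 in
/-- Upper tail inequality for positive linear combinations of `p`-th powers of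
possibly dependent `p`-stable random variables: there is `α_p` depending only on
`p` with `Pr[∑ γ_i |X_i|^p > α_p γ t] ≤ 2 log(n t) / t`. -/
theorem dependent_p_stable_upper_tail (p : ℝ) (hp1 : 1 ≤ p) (hp2 : p < 2)
    (D : Measure ℝ) [IsProbabilityMeasure D] (hD : IsPStable p D) :
    ∃ α : ℝ, 0 < α ∧
      ∀ {Ω : Type} {mΩ : MeasurableSpace Ω} (μ : Measure Ω), IsProbabilityMeasure μ →
        ∀ n : ℕ, 3 ≤ n →
          ∀ X : Fin n → Ω → ℝ, (∀ i, Measure.map (X i) μ = D) →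
            ∀ γ : Fin n → ℝ, (∀ i, 0 < γ i) →
              ∀ t : ℝ, 1 ≤ t →
                μ {ω | α * (∑ i, γ i) * t < ∑ i, γ i * |X i ω| ^ p} ≤
                  ENNReal.ofReal (2 * Real.log (n * t) / t) := by
  obtain ⟨A, hA1, htail⟩ := tail_bound hp1 hp2 hD
  have hp0 : (0:ℝ) < p := by linarith
  set α : ℝ := 9 * (A + 1)^2 with hα
  have hα1 : (1:ℝ) ≤ α := by nlinarith
  have hαpos : (0:ℝ) < α := by linarith
  refine ⟨α, hαpos, ?_⟩
  intro Ω mΩ μ hμ n hn X hX γ hγ t ht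
  have hnR : (3:ℝ) ≤ (n:ℝ) := by exact_mod_cast hn
  have hn0 : (0:ℝ) < n := by linarith
  have ht0 : (0:ℝ) < t := by linarith
  set Γ : ℝ := ∑ i, γ i with hΓ
  have hΓpos : 0 < Γ := Finset.sum_pos (fun i _ => hγ i)
    ⟨⟨0, by omega⟩, Finset.mem_univ _⟩
  set M : ℝ := α * n * t with hM
  have hnt1 : (1:ℝ) ≤ n * t := by nlinarith
  have hM1 : 1 ≤ M := by
    calc (1:ℝ) ≤ α := hα1
      _ = α * 1 := (mul_one α).symm
      _ ≤ α * (n * t) := by nlinarith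
      _ = α * n * t := by ring
  have hMpos : 0 < M := by linarith
  have hXae : ∀ i, AEMeasurable (X i) μ := by
    intro i
    by_contra hnot
    have h0 := Measure.map_of_not_aemeasurable hnot
    rw [hX i] at h0
    exact (IsProbabilityMeasure.ne_zero D) h0
  -- the set {x | M < |x|^p} rewritten
  have hsetEq : {x : ℝ | M < |x| ^ p} = {x : ℝ | M ^ (1/p) < |x|} := by
    ext x
    simp only [Set.mem_setOf_eq]
    have heq : (M ^ (1/p)) ^ p = M := by
      rw [← Real.rpow_mul (le_of_lt hMpos), one_div, inv_mul_cancel₀ hp0.ne', Real.rpow_one]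
    constructor
    · intro h
      have := (Real.rpow_lt_rpow_iff (z := p) (Real.rpow_nonneg hMpos.le _)
        (abs_nonneg x) hp0).mp (by rw [heq]; exact h)
      exact this
    · intro h
      have := (Real.rpow_lt_rpow_iff (z := p) (Real.rpow_nonneg hMpos.le _)
        (abs_nonneg x) hp0).mpr h
      rwa [heq] at this
  have htailM : D {x : ℝ | M < |x| ^ p} ≤ ENNReal.ofReal (A / M) := by
    rw [hsetEq]
    have := htail (M ^ (1/p)) (Real.rpow_pos_of_pos hMpos _)
    have heq : (M ^ (1/p)) ^ p = M := by
      rw [← Real.rpow_mul (le_of_lt hMpos), one_div, inv_mul_cancel₀ hp0.ne', Real.rpow_one]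
    rwa [heq] at this
  -- subset decomposition
  have hsub : {ω | α * Γ * t < ∑ i, γ i * |X i ω| ^ p} ⊆
      (⋃ i, {ω | M < |X i ω| ^ p}) ∪
        {ω | α * Γ * t < ∑ i, γ i * min (|X i ω| ^ p) M} := by
    intro ω hω
    by_cases hcase : ∃ i, M < |X i ω| ^ p
    · left
      obtain ⟨i, hi⟩ := hcase
      exact Set.mem_iUnion.mpr ⟨i, hi⟩
    · right
      push_neg at hcase
      have hmin : ∀ i ∈ Finset.univ, γ i * min (|X i ω| ^ p) M = γ i * |X i ω| ^ p := by
        intro i _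
        rw [min_eq_left (hcase i)]
      simp only [Set.mem_setOf_eq]
      rw [Finset.sum_congr rfl hmin]
      exact hω
  -- bound first piece
  have hbound1 : μ (⋃ i, {ω | M < |X i ω| ^ p}) ≤ ENNReal.ofReal (A / (α * t)) := by
    calc μ (⋃ i, {ω | M < |X i ω| ^ p}) ≤ ∑' i : Fin n, μ {ω | M < |X i ω| ^ p} :=
          measure_iUnion_le _
      _ = ∑ i : Fin n, μ {ω | M < |X i ω| ^ p} := tsum_fintype _
      _ ≤ ∑ _i : Fin n, ENNReal.ofReal (A / M) := by
          apply Finset.sum_le_sum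
          intro i _
          have hms : MeasurableSet {x : ℝ | M < |x| ^ p} :=
            measurableSet_lt measurable_const (hpow_abs_meas hp0.le)
          have : μ {ω | M < |X i ω| ^ p} = (μ.map (X i)) {x : ℝ | M < |x| ^ p} := by
            rw [Measure.map_apply_of_aemeasurable (hXae i) hms]
            rfl
          rw [this, hX i]
          exact htailM
      _ = (n : ENNReal) * ENNReal.ofReal (A / M) := by
          rw [Finset.sum_const, Finset.card_univ, Fintype.card_fin, nsmul_eq_mul]
      _ = ENNReal.ofReal ((n : ℝ) * (A / M)) := by
          rw [ENNReal.ofReal_mul (by positivity : (0:ℝ) ≤ (n:ℝ)), ENNReal.ofReal_natCast]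
      _ = ENNReal.ofReal (A / (α * t)) := by
          congr 1
          rw [hM]
          field_simp
  -- bound second piece (Markov)
  have hbound2 : μ {ω | α * Γ * t < ∑ i, γ i * min (|X i ω| ^ p) M} ≤
      ENNReal.ofReal ((1 + A * Real.log M) / (α * t)) := by
    set F : Ω → ℝ≥0∞ := fun ω => ∑ i, ENNReal.ofReal (γ i * min (|X i ω| ^ p) M) with hF
    have hmeas_i : ∀ i : Fin n, AEMeasurable
        (fun ω => ENNReal.ofReal (γ i * min (|X i ω| ^ p) M)) μ := by
      intro i
      have hm : Measurable (fun x : ℝ => ENNReal.ofReal (γ i * min (|x| ^ p) M)) :=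
        ENNReal.measurable_ofReal.comp
          (measurable_const.mul ((hpow_abs_meas hp0.le).min measurable_const))
      exact hm.comp_aemeasurable (hXae i)
    have hFae : AEMeasurable F μ := Finset.aemeasurable_fun_sum _ (fun i _ => hmeas_i i)
    have hc0 : (0:ℝ) < α * Γ * t := by positivity
    have hsub2 : {ω | α * Γ * t < ∑ i, γ i * min (|X i ω| ^ p) M} ⊆
        {ω | ENNReal.ofReal (α * Γ * t) ≤ F ω} := by
      intro ω hω
      have hsum : F ω = ENNReal.ofReal (∑ i, γ i * min (|X i ω| ^ p) M) := by
        exact (ENNReal.ofReal_sum_of_nonneg (fun i _ => mul_nonneg (hγ i).le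
          (le_min (Real.rpow_nonneg (abs_nonneg _) p) hMpos.le))).symm
      simp only [Set.mem_setOf_eq]
      rw [hsum]
      exact ENNReal.ofReal_le_ofReal (le_of_lt hω)
    have hmarkov := meas_ge_le_lintegral_div hFae
      (by simp [ENNReal.ofReal_pos.mpr hc0, ne_of_gt] : ENNReal.ofReal (α * Γ * t) ≠ 0)
      ENNReal.ofReal_ne_top
    have hint : ∫⁻ ω, F ω ∂μ ≤ ENNReal.ofReal (Γ * (1 + A * Real.log M)) := by
      rw [hF]
      calc ∫⁻ ω, ∑ i, ENNReal.ofReal (γ i * min (|X i ω| ^ p) M) ∂μ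
          = ∑ i, ∫⁻ ω, ENNReal.ofReal (γ i * min (|X i ω| ^ p) M) ∂μ :=
            lintegral_finset_sum' _ (fun i _ => hmeas_i i)
        _ ≤ ∑ i, ENNReal.ofReal (γ i) * ENNReal.ofReal (1 + A * Real.log M) := by
            apply Finset.sum_le_sum
            intro i _
            have hre : ∀ ω, ENNReal.ofReal (γ i * min (|X i ω| ^ p) M) =
                ENNReal.ofReal (γ i) * ENNReal.ofReal (min (|X i ω| ^ p) M) := by
              intro ω
              rw [ENNReal.ofReal_mul (le_of_lt (hγ i))]
            simp only [hre]
            rw [lintegral_const_mul' _ _ ENNReal.ofReal_ne_top]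
            apply mul_le_mul_right
            -- transfer to D
            have hgm : Measurable (fun x : ℝ => ENNReal.ofReal (min (|x| ^ p) M)) :=
              ENNReal.measurable_ofReal.comp ((hpow_abs_meas hp0.le).min measurable_const)
            have htrans := lintegral_map' hgm.aemeasurable (hXae i)
            rw [hX i] at htrans
            rw [← htrans]
            exact trunc_moment hp1 A hA1 htail M hM1
        _ = ENNReal.ofReal (Γ * (1 + A * Real.log M)) := by
            rw [← Finset.sum_mul, ← ENNReal.ofReal_sum_of_nonneg
              (fun i _ => le_of_lt (hγ i)), ← hΓ, ← ENNReal.ofReal_mul hΓpos.le]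
    calc μ {ω | α * Γ * t < ∑ i, γ i * min (|X i ω| ^ p) M}
        ≤ μ {ω | ENNReal.ofReal (α * Γ * t) ≤ F ω} := measure_mono hsub2
      _ ≤ (∫⁻ ω, F ω ∂μ) / ENNReal.ofReal (α * Γ * t) := hmarkov
      _ ≤ ENNReal.ofReal (Γ * (1 + A * Real.log M)) / ENNReal.ofReal (α * Γ * t) := by
          gcongr
      _ = ENNReal.ofReal (Γ * (1 + A * Real.log M) / (α * Γ * t)) := by
          rw [ENNReal.ofReal_div_of_pos hc0]
      _ = ENNReal.ofReal ((1 + A * Real.log M) / (α * t)) := by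
          congr 1
          field_simp
  -- combine
  have hlogM0 : 0 ≤ Real.log M := Real.log_nonneg hM1
  have hcomb : μ {ω | α * Γ * t < ∑ i, γ i * |X i ω| ^ p} ≤
      ENNReal.ofReal ((A + 1 + A * Real.log M) / (α * t)) := by
    calc μ {ω | α * Γ * t < ∑ i, γ i * |X i ω| ^ p}
        ≤ μ ((⋃ i, {ω | M < |X i ω| ^ p}) ∪
            {ω | α * Γ * t < ∑ i, γ i * min (|X i ω| ^ p) M}) := measure_mono hsub
      _ ≤ μ (⋃ i, {ω | M < |X i ω| ^ p}) +
            μ {ω | α * Γ * t < ∑ i, γ i * min (|X i ω| ^ p) M} := measure_union_le _ _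
      _ ≤ ENNReal.ofReal (A / (α * t)) + ENNReal.ofReal ((1 + A * Real.log M) / (α * t)) :=
            add_le_add hbound1 hbound2
      _ = ENNReal.ofReal ((A + 1 + A * Real.log M) / (α * t)) := by
          rw [← ENNReal.ofReal_add (by positivity) (by positivity)]
          congr 1
          field_simp
          ring
  refine le_trans hcomb (ENNReal.ofReal_le_ofReal ?_)
  -- final numeric inequality
  clear hcomb hsub hbound1 hbound2 htailM hsetEq hXae hX htail hD
  clear_value M Γ α
  set L : ℝ := Real.log ((n:ℝ) * t) with hL
  have hL1 : (1:ℝ) ≤ L := by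
    rw [hL, ← Real.exp_le_exp, Real.exp_log (by positivity)]
    calc Real.exp 1 ≤ 2.7182818286 := le_of_lt Real.exp_one_lt_d9
      _ ≤ 3 := by norm_num
      _ ≤ (n:ℝ) * t := by nlinarith
  have hlogM : Real.log M = Real.log α + L := by
    rw [hM, hL, mul_assoc, Real.log_mul (by positivity) (by positivity)]
  have hlogα : Real.log α ≤ 6 * (A + 1) - 2 := by
    have h9 : α = (3 * (A + 1)) ^ (2:ℕ) := by rw [hα]; ring
    rw [h9, Real.log_pow]
    have := Real.log_le_sub_one_of_pos (by nlinarith : (0:ℝ) < 3 * (A+1))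
    push_cast
    nlinarith
  rw [div_le_div_iff₀ (by positivity) ht0]
  have hA0 : (0:ℝ) ≤ A := by linarith
  have hkey : A + 1 + A * Real.log M ≤ 2 * α * L := by
    rw [hlogM]
    have hml : A * Real.log α ≤ A * (6 * (A + 1) - 2) :=
      mul_le_mul_of_nonneg_left hlogα hA0
    have h1 : A + 1 + A * Real.log α ≤ α := by nlinarith [hml, hα]
    have h2 : A ≤ α := by nlinarith [hα]
    have h3 : α ≤ α * L := by nlinarith
    have h4 : A * L ≤ α * L := mul_le_mul_of_nonneg_right h2 (by linarith)
    nlinarith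
  have hLt : 0 < α * t := by positivity
  calc (A + 1 + A * Real.log M) * t ≤ (2 * α * L) * t := by nlinarith
    _ = 2 * L * (α * t) := by ring
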